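/- Let n ≥ 4 be an integer and A := ℤ⟨x,y,z⟩/((x + y + z, x², y², z^{n−2})). Then for every integer m ≥ 1, the degree-m component Λ_m is zero unless m is divisible by 4 and m ≤ 2(n−2); and for each m with 4 ∣ m and 4 ≤ m ≤ 2(n−2), Λ_m is a cyclic group of order 2, generated by the class of (xy)^{m/4}. -/

import Mathlib

noncomputable section

/-- Basis monoid elements: zero, one, or a word `wd s L` (alternating word of
length `L` starting with letter `s`). -/
inductive MD : Type
  | mz : MD
  | mone : MD
  | wd : Bool → ℕ → MD
deriving DecidableEq

namespace MD

/-- last letter of alternating word of length `L` starting with `s`. -/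
def lastL (s : Bool) (L : ℕ) : Bool := if L % 2 = 1 then s else !s

def mulN (N : ℕ) : MD → MD → MD
  | mz, _ => mz
  | mone, a => a
  | wd _ _, mz => mz
  | wd s L, mone => wd s L
  | wd s L, wd s' L' =>
    if L = 0 ∨ L' = 0 ∨ lastL s L = s' ∨ N < L + L' then mz
    else if L + L' = N then wd false N else wd s (L + L')

variable {N : ℕ}

lemma wd_wd (u : Bool) (U : ℕ) (v : Bool) (V : ℕ) :
    mulN N (wd u U) (wd v V) =
      if U = 0 ∨ V = 0 ∨ lastL u U = v ∨ N < U + V then mz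
      else if U + V = N then wd false N else wd u (U + V) := rfl

lemma wd_mz (h : U = 0 ∨ V = 0 ∨ lastL u U = v ∨ N < U + V) :
    mulN N (wd u U) (wd v V) = mz := by rw [wd_wd, if_pos h]

lemma wd_top (hU : U ≠ 0) (hV : V ≠ 0) (hc : lastL u U ≠ v) (ht : U + V = N) :
    mulN N (wd u U) (wd v V) = wd false N := by
  rw [wd_wd, if_neg, if_pos ht]
  simp [hU, hV, hc]; omega

lemma wd_mid (hU : U ≠ 0) (hV : V ≠ 0) (hc : lastL u U ≠ v) (ht : U + V < N) :
    mulN N (wd u U) (wd v V) = wd u (U + V) := by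
  rw [wd_wd, if_neg, if_neg (by omega)]
  simp [hU, hV, hc]; omega

lemma lastL_concat {u v : Bool} {U V : ℕ} (h : lastL u U ≠ v) :
    lastL u (U + V) = lastL v V := by
  rcases Nat.mod_two_eq_zero_or_one U with h2 | h2 <;>
    rcases Nat.mod_two_eq_zero_or_one V with h2' | h2' <;>
      simp [lastL, h2, h2', Nat.add_mod, *] at * <;> cases u <;> cases v <;> simp_all


lemma mul_z (a : MD) : mulN N a mz = mz := by cases a <;> rfl
lemma z_mul (a : MD) : mulN N mz a = mz := rfl
lemma mul_one' (a : MD) : mulN N a mone = a := by cases a <;> rfl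
lemma one_mul' (a : MD) : mulN N mone a = a := rfl

lemma mul_ne_one (u : Bool) (U : ℕ) (v : Bool) (V : ℕ) :
    mulN N (wd u U) (wd v V) ≠ mone := by
  rw [wd_wd]; split
  · exact fun h => MD.noConfusion h
  · split <;> exact fun h => MD.noConfusion h

lemma mulN_assoc (N : ℕ) (a b c : MD) :
    mulN N (mulN N a b) c = mulN N a (mulN N b c) := by
  cases a with
  | mz => simp [z_mul]
  | mone => simp [one_mul']
  | wd s L =>
    cases b with
    | mz => rw [mul_z, z_mul, mul_z]
    | mone => rw [mul_one', one_mul']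
    | wd s' L' =>
      cases c with
      | mz => rw [mul_z, mul_z, mul_z]
      | mone => rw [mul_one', mul_one']
      | wd s'' L'' =>
        rcases Nat.eq_zero_or_pos L with hL | hLpos
        · rw [wd_mz (Or.inl hL), z_mul]
          cases h : mulN N (wd s' L') (wd s'' L'') with
          | mz => rw [mul_z]
          | mone => exact absurd h (mul_ne_one _ _ _ _)
          | wd t T => rw [wd_mz (Or.inl hL)]
        rcases Nat.eq_zero_or_pos L' with hL'0 | hL'pos
        · rw [wd_mz (u := s) (U := L) (v := s') (V := L') (Or.inr (Or.inl hL'0)), z_mul,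
            wd_mz (u := s') (U := L') (v := s'') (V := L'') (Or.inl hL'0), mul_z]
        rcases Nat.eq_zero_or_pos L'' with hL''0 | hL''pos
        · rw [wd_mz (u := s') (U := L') (v := s'') (V := L'') (Or.inr (Or.inl hL''0)), mul_z]
          cases h : mulN N (wd s L) (wd s' L') with
          | mz => rw [z_mul]
          | mone => exact absurd h (mul_ne_one _ _ _ _)
          | wd t T => exact wd_mz (Or.inr (Or.inl hL''0))
        have hL : L ≠ 0 := hLpos.ne'
        have hL' : L' ≠ 0 := hL'pos.ne'
        have hL'' : L'' ≠ 0 := hL''pos.ne'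
        by_cases hA : lastL s L = s'
        · -- clash between a and b: both sides mz
          rw [wd_mz (Or.inr (Or.inr (Or.inl hA))), z_mul]
          by_cases hB : lastL s' L' = s''
          · rw [wd_mz (Or.inr (Or.inr (Or.inl hB))), mul_z]
          rcases lt_trichotomy N (L' + L'') with hT2 | hT2 | hT2
          · rw [wd_mz (Or.inr (Or.inr (Or.inr hT2))), mul_z]
          · rw [wd_top hL' hL'' hB hT2.symm,
              wd_mz (Or.inr (Or.inr (Or.inr (by omega))))]
          · rw [wd_mid hL' hL'' hB hT2, wd_mz (Or.inr (Or.inr (Or.inl hA)))]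
        by_cases hB : lastL s' L' = s''
        · -- clash between b and c: both sides mz
          rw [wd_mz (Or.inr (Or.inr (Or.inl hB))), mul_z]
          rcases lt_trichotomy N (L + L') with hT1 | hT1 | hT1
          · rw [wd_mz (Or.inr (Or.inr (Or.inr hT1))), z_mul]
          · rw [wd_top hL hL' hA hT1.symm,
              wd_mz (Or.inr (Or.inr (Or.inr (by omega))))]
          · rw [wd_mid hL hL' hA hT1,
              wd_mz (Or.inr (Or.inr (Or.inl (by rw [lastL_concat hA]; exact hB))))]
        -- no clashes
        rcases lt_trichotomy N (L + L') with hT1 | hT1 | hT1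
        · -- L + L' > N: both sides mz
          rw [wd_mz (Or.inr (Or.inr (Or.inr hT1))), z_mul]
          rcases lt_trichotomy N (L' + L'') with hT2 | hT2 | hT2
          · rw [wd_mz (Or.inr (Or.inr (Or.inr hT2))), mul_z]
          · rw [wd_top hL' hL'' hB hT2.symm,
              wd_mz (Or.inr (Or.inr (Or.inr (by omega))))]
          · rw [wd_mid hL' hL'' hB hT2,
              wd_mz (Or.inr (Or.inr (Or.inr (by omega))))]
        · -- L + L' = N
          rw [wd_top hL hL' hA hT1.symm,
            wd_mz (Or.inr (Or.inr (Or.inr (by omega))))]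
          rcases lt_trichotomy N (L' + L'') with hT2 | hT2 | hT2
          · rw [wd_mz (Or.inr (Or.inr (Or.inr hT2))), mul_z]
          · rw [wd_top hL' hL'' hB hT2.symm,
              wd_mz (Or.inr (Or.inr (Or.inr (by omega))))]
          · rw [wd_mid hL' hL'' hB hT2,
              wd_mz (Or.inr (Or.inr (Or.inr (by omega))))]
        · -- L + L' < N
          rw [wd_mid hL hL' hA hT1]
          have hc1 : lastL s (L + L') ≠ s'' := by rw [lastL_concat hA]; exact hB
          rcases lt_trichotomy N (L + L' + L'') with hT | hT | hT
          · rw [wd_mz (Or.inr (Or.inr (Or.inr hT)))]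
            rcases lt_trichotomy N (L' + L'') with hT2 | hT2 | hT2
            · rw [wd_mz (Or.inr (Or.inr (Or.inr hT2))), mul_z]
            · rw [wd_top hL' hL'' hB hT2.symm,
                wd_mz (Or.inr (Or.inr (Or.inr (by omega))))]
            · rw [wd_mid hL' hL'' hB hT2,
                wd_mz (Or.inr (Or.inr (Or.inr (by omega))))]
          · have hT2 : L' + L'' < N := by omega
            rw [wd_top (by omega) hL'' hc1 (by omega), wd_mid hL' hL'' hB hT2,
              wd_top hL (by omega) hA (by omega)]
          · have hT2 : L' + L'' < N := by omega
            rw [wd_mid (by omega) hL'' hc1 (by omega), wd_mid hL' hL'' hB hT2,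
              wd_mid hL (by omega) hA (by omega), Nat.add_assoc]

end MD

noncomputable section CCpart
open MD

/-- Type synonym carrying the `N`-dependent monoid structure. -/
def MDT (N : ℕ) : Type := MD

instance (N : ℕ) : Monoid (MDT N) where
  mul := mulN N
  one := mone
  mul_assoc := mulN_assoc N
  one_mul := one_mul'
  mul_one := mul_one'

instance (N : ℕ) : DecidableEq (MDT N) := by unfold MDT; infer_instance

lemma mulT_def {N : ℕ} (x y : MDT N) : x * y = mulN N x y := rfl
lemma oneT_def {N : ℕ} : (1 : MDT N) = mone := rfl

/-- The auxiliary algebra. -/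
abbrev CC (N : ℕ) : Type := MonoidAlgebra (ZMod 2) (MDT N)

namespace CC

variable {N : ℕ}

/-- basis word element -/
def ws (N : ℕ) (s : Bool) (L : ℕ) : CC N := MonoidAlgebra.single (wd s L : MDT N) 1

/-- the "absorbing" element `E`. -/
def Ee (N : ℕ) : CC N := MonoidAlgebra.single (mz : MDT N) 1

lemma single_mul (m m' : MDT N) (c c' : ZMod 2) :
    (MonoidAlgebra.single m c * MonoidAlgebra.single m' c' : CC N)
      = MonoidAlgebra.single (mulN N m m') (c * c') := by
  rw [MonoidAlgebra.single_mul_single]; rfl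

lemma Ee_mul_Ee : Ee N * Ee N = Ee N := by
  rw [Ee]; erw [single_mul]; norm_num; rfl

lemma ws_mul_Ee (s : Bool) (L : ℕ) : ws N s L * Ee N = Ee N := by
  rw [ws, Ee]; erw [single_mul]; norm_num; rfl

lemma Ee_mul_ws (s : Bool) (L : ℕ) : Ee N * ws N s L = Ee N := by
  rw [ws, Ee]; erw [single_mul]; norm_num; rfl

lemma two_smul_zero (u : CC N) : u + u = 0 := by
  have : (2 : ZMod 2) = 0 := rfl
  calc u + u = (2 : ZMod 2) • u := by rw [two_smul]
  _ = 0 := by rw [this, zero_smul]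

lemma ws_mul_ws_clash (s s' : Bool) (L L' : ℕ)
    (h : L = 0 ∨ L' = 0 ∨ lastL s L = s' ∨ N < L + L') :
    ws N s L * ws N s' L' = Ee N := by
  rw [ws, ws, Ee]; erw [single_mul]; rw [mulN, if_pos h]; norm_num; rfl

lemma ws_mul_ws (s s' : Bool) (L L' : ℕ) (hL : L ≠ 0) (hL' : L' ≠ 0)
    (hc : lastL s L ≠ s') (hle : L + L' ≤ N) (hs : L + L' = N → s = false) :
    ws N s L * ws N s' L' = ws N s (L + L') := by
  rw [ws, ws, ws]; erw [single_mul]; rw [mulN, if_neg (by simp [hL, hL', hc]; omega)]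
  norm_num
  rcases eq_or_ne (L + L') N with he | he
  · rw [if_pos he, hs he, he]; rfl
  · rw [if_neg he]; rfl

end CC

namespace CC

variable {N : ℕ}

lemma lastL_not (s : Bool) (L : ℕ) : lastL (!s) L = !lastL s L := by
  rw [lastL, lastL]; split <;> simp

/-- normalized top product -/
lemma ws_mul_ws_top (s s' : Bool) (L L' : ℕ) (hL : L ≠ 0) (hL' : L' ≠ 0)
    (hc : lastL s L ≠ s') (he : L + L' = N) :
    ws N s L * ws N s' L' = ws N false N := by
  rw [ws, ws, ws]; erw [single_mul]; rw [mulN, if_neg (by simp [hL, hL', hc]; omega), if_pos he]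
  norm_num; rfl

/-- the `x` generator image -/
def Xc (N : ℕ) : CC N := ws N false 1 + Ee N
/-- the `y` generator image -/
def Yc (N : ℕ) : CC N := ws N true 1 + Ee N

lemma abel4 (u v w : CC N) : u + v + (w + u) = (v + w) + (u + u) := by abel

lemma Xc_sq : Xc N * Xc N = 0 := by
  rw [Xc, add_mul, mul_add, mul_add,
    ws_mul_ws_clash false false 1 1 (Or.inr (Or.inr (Or.inl (by decide)))),
    ws_mul_Ee, Ee_mul_ws, Ee_mul_Ee, two_smul_zero (Ee N)]
  norm_num

lemma Yc_sq : Yc N * Yc N = 0 := by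
  rw [Yc, add_mul, mul_add, mul_add,
    ws_mul_ws_clash true true 1 1 (Or.inr (Or.inr (Or.inl (by decide)))),
    ws_mul_Ee, Ee_mul_ws, Ee_mul_Ee, two_smul_zero (Ee N)]
  norm_num

lemma abel5 (u v w : CC N) : u + v + (w + v) = (u + w) + (v + v) := by abel

lemma Xc_add_Yc : Xc N + Yc N = ws N false 1 + ws N true 1 := by
  rw [Xc, Yc, abel5, two_smul_zero, add_zero]

/-- the two-letter sum `a + b` written with `t` first -/
lemma ab_comm (t : Bool) : ws N false 1 + ws N true 1 = ws N t 1 + ws N (!t) 1 := by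
  cases t
  · rfl
  · exact add_comm _ _

lemma altsum_pow (L : ℕ) (h1 : 1 ≤ L) (h2 : L < N) :
    (ws N false 1 + ws N true 1) ^ L = ws N false L + ws N true L := by
  induction L with
  | zero => omega
  | succ L ih =>
    rcases Nat.eq_zero_or_pos L with h0 | hLpos
    · subst h0; rw [pow_one]
    have ih' := ih hLpos (by omega)
    set t := lastL false L with ht
    have htt : lastL true L = !t := by rw [ht, ← lastL_not]; norm_num
    rw [pow_succ, ih', ab_comm t, add_mul, mul_add, mul_add,
      ws_mul_ws_clash false t L 1 (Or.inr (Or.inr (Or.inl ht.symm))),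
      ws_mul_ws false (!t) L 1 hLpos.ne' one_ne_zero (by rw [← ht]; simp)
        (by omega) (fun _ => rfl),
      ws_mul_ws true t L 1 hLpos.ne' one_ne_zero (by rw [htt]; simp)
        (by omega) (by omega),
      ws_mul_ws_clash true (!t) L 1 (Or.inr (Or.inr (Or.inl htt)))]
    rw [abel4, two_smul_zero, add_zero]

lemma altsum_pow_N (hN : 2 ≤ N) : (ws N false 1 + ws N true 1) ^ N = 0 := by
  have hpos : 0 < N - 1 := by omega
  · have : N = (N - 1) + 1 := by omega
    rw [this, pow_succ, altsum_pow (N-1) hpos (by omega), ab_comm (lastL false (N-1)),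
      add_mul, mul_add, mul_add]
    set t := lastL false (N-1) with ht
    have htt : lastL true (N-1) = !t := by rw [ht, ← lastL_not]; norm_num
    rw [ws_mul_ws_clash false t (N-1) 1 (Or.inr (Or.inr (Or.inl ht.symm))),
      ws_mul_ws_top false (!t) (N-1) 1 hpos.ne' one_ne_zero (by rw [← ht]; simp) (by omega),
      ws_mul_ws_top true t (N-1) 1 hpos.ne' one_ne_zero (by rw [htt]; simp) (by omega),
      ws_mul_ws_clash true (!t) (N-1) 1 (Or.inr (Or.inr (Or.inl htt)))]
    rw [abel4, two_smul_zero, zero_add, two_smul_zero]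

end CC

namespace CC

variable {N : ℕ}

lemma altsum_pow_ge (hN : 2 ≤ N) (q : ℕ) (hq : N ≤ q) :
    (ws N false 1 + ws N true 1) ^ q = 0 := by
  have : q = N + (q - N) := by omega
  rw [this, pow_add, altsum_pow_N hN, zero_mul]

lemma Xc_mul_Yc (hN : 2 ≤ N) : Xc N * Yc N = ws N false 2 + Ee N := by
  rw [Xc, Yc, add_mul, mul_add, mul_add,
    ws_mul_ws false true 1 1 one_ne_zero one_ne_zero (by decide) hN (fun _ => rfl),
    ws_mul_Ee, Ee_mul_ws, Ee_mul_Ee]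
  have : ws N false (1+1) + Ee N + (Ee N + Ee N) = ws N false 2 + Ee N + (Ee N + Ee N) := by
    norm_num
  rw [this, two_smul_zero (Ee N), add_zero]

lemma XY_pow (hN : 2 ≤ N) (k : ℕ) (hk : 1 ≤ k) (h2k : 2 * k ≤ N) :
    (Xc N * Yc N) ^ k = ws N false (2 * k) + Ee N := by
  induction k with
  | zero => omega
  | succ k ih =>
    rcases Nat.eq_zero_or_pos k with h0 | hkpos
    · subst h0; rw [pow_one, Xc_mul_Yc hN]
    have ih' := ih hkpos (by omega)
    rw [pow_succ, ih', Xc_mul_Yc hN, add_mul, mul_add, mul_add,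
      ws_mul_ws false false (2*k) 2 (by omega) (by decide)
        (by rw [lastL]; simp [Nat.mul_mod_right]) (by omega) (fun _ => rfl),
      ws_mul_Ee, Ee_mul_ws, Ee_mul_Ee, abel5, two_smul_zero, add_zero,
      show 2 * k + 2 = 2 * (k + 1) by omega]

/-- the count functional on basis elements -/
def tcount (k : ℕ) : MD → ZMod 2 := fun m =>
  (if m = wd false (2*k) then 1 else 0) + (if m = wd true (2*k) then 1 else 0)

lemma tcount_wd (k : ℕ) (s : Bool) (L : ℕ) :
    tcount k (wd s L) = if L = 2*k then 1 else 0 := by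
  cases s <;> simp [tcount] <;> split <;> simp_all

lemma tcount_mz (k : ℕ) : tcount k mz = 0 := by simp [tcount]
lemma tcount_mone (k : ℕ) (hk : 1 ≤ k) : tcount k mone = 0 := by simp [tcount]

lemma lastL_symm_iff (u v : Bool) (U V : ℕ) (hpar : (U + V) % 2 = 0) :
    (lastL u U = v) ↔ (lastL v V = u) := by
  rcases Nat.mod_two_eq_zero_or_one U with h2 | h2 <;>
    rcases Nat.mod_two_eq_zero_or_one V with h2' | h2' <;>
      [skip; omega; omega; skip] <;>
        simp [lastL, h2, h2'] <;> cases u <;> cases v <;> simp_all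

lemma tcount_mulN_odd (k : ℕ) (u v : Bool) (U V : ℕ) (hpar : (U + V) % 2 = 1) :
    tcount k (mulN N (wd u U) (wd v V)) = 0 := by
  rw [wd_wd]
  split
  · exact tcount_mz k
  · rename_i hcond
    push_neg at hcond
    split
    · rename_i he
      rw [tcount_wd]
      have : N % 2 = 1 := he ▸ hpar
      rw [if_neg (by omega)]
    · rw [tcount_wd, if_neg (by omega)]

lemma tcount_mulN_symm (k : ℕ) (hk : 1 ≤ k) (m m' : MD) :
    tcount k (mulN N m m') = tcount k (mulN N m' m) := by
  cases m with
  | mz => rw [z_mul, mul_z]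
  | mone => rw [one_mul', mul_one']
  | wd u U =>
    cases m' with
    | mz => rw [z_mul, mul_z]
    | mone => rw [one_mul', mul_one']
    | wd v V =>
      rcases Nat.eq_zero_or_pos U with h0 | hU
      · rw [wd_mz (Or.inl h0), wd_mz (Or.inr (Or.inl h0))]
      rcases Nat.eq_zero_or_pos V with h0 | hV
      · rw [wd_mz (Or.inr (Or.inl h0)), wd_mz (Or.inl h0)]
      rcases lt_or_ge N (U + V) with hbig | hle
      · rw [wd_mz (Or.inr (Or.inr (Or.inr hbig))),
          wd_mz (Or.inr (Or.inr (Or.inr (by omega))))]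
      rcases Nat.mod_two_eq_zero_or_one (U + V) with hpar | hpar
      · -- even total length
        by_cases hc : lastL u U = v
        · rw [wd_mz (Or.inr (Or.inr (Or.inl hc))),
            wd_mz (Or.inr (Or.inr (Or.inl ((lastL_symm_iff u v U V hpar).mp hc))))]
        · have hc' : lastL v V ≠ u := fun h => hc ((lastL_symm_iff u v U V hpar).mpr h)
          rcases eq_or_ne (U + V) N with he | he
          · rw [wd_top hU.ne' hV.ne' hc he, wd_top hV.ne' hU.ne' hc' (by omega)]
          · rw [wd_mid hU.ne' hV.ne' hc (by omega), wd_mid hV.ne' hU.ne' hc' (by omega),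
              tcount_wd, tcount_wd, Nat.add_comm]
      · rw [tcount_mulN_odd k u v U V hpar, tcount_mulN_odd k v u V U (by omega)]

/-- the trace functional on `CC N`, for degree `4k`. -/
def tauk (N k : ℕ) : CC N →+ ZMod 2 :=
  AddMonoidHom.comp (Finsupp.applyAddHom (M := ZMod 2) (wd false (2*k) : MDT N)
    + Finsupp.applyAddHom (M := ZMod 2) (wd true (2*k) : MDT N))
    (MonoidAlgebra.coeffAddEquiv (R := ZMod 2) (M := MDT N)).toAddMonoidHom

lemma tauk_apply (k : ℕ) (f : CC N) :
    tauk N k f = f.coeff (wd false (2*k)) + f.coeff (wd true (2*k)) := rfl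

lemma tauk_single (k : ℕ) (m : MDT N) (c : ZMod 2) :
    tauk N k (MonoidAlgebra.single m c) = c * tcount k m := by
  show (Finsupp.single (α := MD) m c) (wd false (2*k))
    + (Finsupp.single (α := MD) m c) (wd true (2*k)) = _
  have key : ∀ m' : MD, (Finsupp.single m' c) (wd false (2*k))
      + (Finsupp.single m' c) (wd true (2*k)) = c * tcount k m' := by
    intro m
    rw [Finsupp.single_apply, Finsupp.single_apply, tcount]
    split <;> split <;> simp_all <;> ring
  exact key m

lemma tauk_trace (k : ℕ) (hk : 1 ≤ k) (f g : CC N) :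
    tauk N k (f * g) = tauk N k (g * f) := by
  induction f using MonoidAlgebra.induction_linear with
  | zero => rw [zero_mul, mul_zero]
  | add f f' hf hf' => rw [add_mul, mul_add, map_add, map_add, hf, hf']
  | single m c =>
    induction g using MonoidAlgebra.induction_linear with
    | zero => rw [zero_mul, mul_zero]
    | add g g' hg hg' => rw [add_mul, mul_add, map_add, map_add, hg, hg']
    | single m' c' =>
      erw [single_mul, single_mul, tauk_single, tauk_single]; rw [mul_comm c c',
        tcount_mulN_symm k hk m m']

end CC


/-- The free associative `ℤ`-algebra `ℤ⟨x,y,z⟩`, graded with `x, y, z` of degree 2. -/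
abbrev F3 : Type := FreeAlgebra ℤ (Fin 3)

/-- The generator `x`. -/
def xF : F3 := FreeAlgebra.ι ℤ 0

/-- The generator `y`. -/
def yF : F3 := FreeAlgebra.ι ℤ 1

/-- The generator `z`. -/
def zF : F3 := FreeAlgebra.ι ℤ 2

/-- The relations presenting `A = ℤ⟨x,y,z⟩/((x+y+z, x^{e₁}, y^{e₂}, z^{e₃}))`. -/
def relD (e₁ e₂ e₃ : ℕ) : F3 → F3 → Prop := fun a b =>
  a ∈ ({xF + yF + zF, xF ^ e₁, yF ^ e₂, zF ^ e₃} : Set F3) ∧ b = 0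

/-- `A = ℤ⟨x,y,z⟩/((x+y+z, x^{e₁}, y^{e₂}, z^{e₃}))`. -/
abbrev AD (e₁ e₂ e₃ : ℕ) : Type := RingQuot (relD e₁ e₂ e₃)

/-- The quotient map. -/
def πD (e₁ e₂ e₃ : ℕ) : F3 →+* AD e₁ e₂ e₃ := RingQuot.mkRingHom _

/-- The image of `x` in `A`. -/
def xD (e₁ e₂ e₃ : ℕ) : AD e₁ e₂ e₃ := πD e₁ e₂ e₃ xF

/-- The image of `y` in `A`. -/
def yD (e₁ e₂ e₃ : ℕ) : AD e₁ e₂ e₃ := πD e₁ e₂ e₃ yF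

/-- The image of `z` in `A`. -/
def zD (e₁ e₂ e₃ : ℕ) : AD e₁ e₂ e₃ := πD e₁ e₂ e₃ zF

/-- The set of all powers `x^q, y^q, z^q` with `q ≥ 1`. -/
def powSet (e₁ e₂ e₃ : ℕ) : Set (AD e₁ e₂ e₃) :=
  {u | ∃ q : ℕ, 1 ≤ q ∧
    (u = xD e₁ e₂ e₃ ^ q ∨ u = yD e₁ e₂ e₃ ^ q ∨ u = zD e₁ e₂ e₃ ^ q)}

/-- The additive subgroup `[A,A] + T` generated by all commutators and all powers of
the generators. -/
def NSub (e₁ e₂ e₃ : ℕ) : AddSubgroup (AD e₁ e₂ e₃) :=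
  AddSubgroup.closure
    ({x | ∃ a b : AD e₁ e₂ e₃, x = a * b - b * a} ∪ powSet e₁ e₂ e₃)

/-- `Λ := A/([A,A] + T)`. -/
abbrev Lam (e₁ e₂ e₃ : ℕ) : Type := AD e₁ e₂ e₃ ⧸ NSub e₁ e₂ e₃

/-- The quotient map `A → Λ`. -/
def mkL (e₁ e₂ e₃ : ℕ) : AD e₁ e₂ e₃ →+ Lam e₁ e₂ e₃ := QuotientAddGroup.mk' _

/-- The monomials of `A` of degree `m` (each generator having degree 2). -/
def monD (e₁ e₂ e₃ m : ℕ) : Set (AD e₁ e₂ e₃) :=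
  {u | ∃ w : List (Fin 3), 2 * w.length = m ∧
    u = (w.map fun i => πD e₁ e₂ e₃ (FreeAlgebra.ι ℤ i)).prod}

/-- The degree-`m` graded component `Λ_m` of `Λ`: the image in `Λ` of the `ℤ`-span of
the degree-`m` monomials of `A`. -/
def LamGrade (e₁ e₂ e₃ m : ℕ) : AddSubgroup (Lam e₁ e₂ e₃) :=
  AddSubgroup.map (mkL e₁ e₂ e₃) (AddSubgroup.closure (monD e₁ e₂ e₃ m))


section ADside

open CC

variable (N : ℕ)

/-- the letter map -/
def letterA (s : Bool) : AD 2 2 N := if s then yD 2 2 N else xD 2 2 N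

lemma rel_sum : xD 2 2 N + yD 2 2 N + zD 2 2 N = 0 := by
  have h : πD 2 2 N (xF + yF + zF) = πD 2 2 N 0 :=
    RingQuot.mkRingHom_rel ⟨by simp, rfl⟩
  rw [map_add, map_add, map_zero] at h
  exact h

lemma rel_x2 : xD 2 2 N * xD 2 2 N = 0 := by
  have h : πD 2 2 N (xF ^ 2) = πD 2 2 N 0 :=
    RingQuot.mkRingHom_rel ⟨by simp, rfl⟩
  rw [map_pow, map_zero, sq] at h
  exact h

lemma rel_y2 : yD 2 2 N * yD 2 2 N = 0 := by
  have h : πD 2 2 N (yF ^ 2) = πD 2 2 N 0 :=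
    RingQuot.mkRingHom_rel ⟨by simp, rfl⟩
  rw [map_pow, map_zero, sq] at h
  exact h

lemma rel_zN : zD 2 2 N ^ N = 0 := by
  have h : πD 2 2 N (zF ^ N) = πD 2 2 N 0 :=
    RingQuot.mkRingHom_rel ⟨by simp, rfl⟩
  rw [map_pow, map_zero] at h
  exact h

lemma z_eq : zD 2 2 N = -(xD 2 2 N + yD 2 2 N) := by
  rw [eq_neg_iff_add_eq_zero, add_comm]
  exact rel_sum N

lemma letter_sq (s : Bool) : letterA N s * letterA N s = 0 := by
  cases s
  · exact rel_x2 N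
  · exact rel_y2 N

/-- alternating words in `AD` -/
def altA : Bool → ℕ → AD 2 2 N
  | _, 0 => 1
  | s, (L+1) => letterA N s * altA (!s) L

lemma letter_sum (t : Bool) :
    xD 2 2 N + yD 2 2 N = letterA N t + letterA N (!t) := by
  cases t
  · rfl
  · exact (add_comm _ _)

lemma altA_mul_letter (L : ℕ) (hL : 1 ≤ L) (s t : Bool) :
    altA N s L * letterA N t
      = if MD.lastL s L = t then 0 else altA N s (L+1) := by
  induction L generalizing s with
  | zero => omega
  | succ L ih =>
    rcases Nat.eq_zero_or_pos L with h0 | hLpos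
    · subst h0
      show (letterA N s * altA N (!s) 0) * letterA N t = _
      rw [show altA N (!s) 0 = 1 from rfl, mul_one]
      rcases eq_or_ne s t with he | he
      · rw [if_pos (by simp [MD.lastL, he]), he, letter_sq]
      · rw [if_neg (by simp [MD.lastL]; exact he)]
        show _ = letterA N s * (letterA N (!s) * altA N (!(!s)) 0)
        rw [show altA N (!(!s)) 0 = 1 from rfl, mul_one]
        congr 1
        cases s <;> cases t <;> simp_all
    · show (letterA N s * altA N (!s) L) * letterA N t = _
      rw [mul_assoc, ih hLpos (!s)]
      have hlast : MD.lastL (!s) L = MD.lastL s (L+1) := by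
        rw [CC.lastL_not]
        rw [MD.lastL, MD.lastL]
        rcases Nat.mod_two_eq_zero_or_one L with h2 | h2 <;>
          simp [h2, Nat.add_mod, Nat.succ_mod_two_eq_zero_iff, Nat.succ_mod_two_eq_one_iff] <;>
            omega
      rcases eq_or_ne (MD.lastL s (L+1)) t with he | he
      · rw [if_pos (hlast.trans he), if_pos he, mul_zero]
      · rw [if_neg (fun h => he (hlast ▸ h)), if_neg he]
        rfl

lemma sum_pow_alt (L : ℕ) (hL : 1 ≤ L) :
    (xD 2 2 N + yD 2 2 N) ^ L = altA N false L + altA N true L := by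
  induction L with
  | zero => omega
  | succ L ih =>
    rcases Nat.eq_zero_or_pos L with h0 | hLpos
    · subst h0
      rw [pow_one]
      show _ = letterA N false * altA N true 0 + letterA N true * altA N false 0
      rw [show altA N true 0 = 1 from rfl, show altA N false 0 = 1 from rfl,
        mul_one, mul_one]
      rfl
    · have hnt : MD.lastL true L = !MD.lastL false L := by
        rw [show (true : Bool) = !false from rfl, CC.lastL_not]
      rw [pow_succ, ih hLpos, letter_sum N (MD.lastL false L), add_mul, mul_add, mul_add,
        altA_mul_letter N L hLpos false, altA_mul_letter N L hLpos false,
        altA_mul_letter N L hLpos true, altA_mul_letter N L hLpos true,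
        if_pos rfl, if_neg (by simp), if_neg (by rw [hnt]; simp), if_pos hnt]
      abel

lemma altA_false_even (k : ℕ) :
    altA N false (2*k) = (xD 2 2 N * yD 2 2 N) ^ k := by
  induction k with
  | zero => rw [Nat.mul_zero, pow_zero]; rfl
  | succ k ih =>
    have h2 : 2 * (k+1) = (2 * k) + 1 + 1 := by omega
    rw [h2]
    show letterA N false * (letterA N true * altA N false (2*k)) = _
    rw [ih, ← mul_assoc, pow_succ']
    rfl

lemma altA_true_even (k : ℕ) :
    altA N true (2*k) = (yD 2 2 N * xD 2 2 N) ^ k := by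
  induction k with
  | zero => rw [Nat.mul_zero, pow_zero]; rfl
  | succ k ih =>
    have h2 : 2 * (k+1) = (2 * k) + 1 + 1 := by omega
    rw [h2]
    show letterA N true * (letterA N false * altA N true (2*k)) = _
    rw [ih, ← mul_assoc, pow_succ']
    rfl

lemma xy_sum_pow_N (hN : 1 ≤ N) : (xD 2 2 N + yD 2 2 N) ^ N = 0 := by
  have h : xD 2 2 N + yD 2 2 N = -zD 2 2 N := by rw [z_eq, neg_neg]
  have h3 : (-zD 2 2 N) ^ N = (-1 : AD 2 2 N) ^ N * zD 2 2 N ^ N := neg_pow (zD 2 2 N) N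
  rw [h, h3, rel_zN, mul_zero]

lemma altA_zero_succN (hN : 1 ≤ N) (s : Bool) : altA N s (N + 1) = 0 := by
  have hsum : altA N false N + altA N true N = 0 := by
    rw [← sum_pow_alt N N hN, xy_sum_pow_N N hN]
  have hx : ∀ t : Bool, letterA N t * altA N t N = 0 := by
    intro t
    obtain ⟨M, hM⟩ : ∃ M, N = M + 1 := ⟨N - 1, by omega⟩
    rw [hM, show altA (M+1) t (M+1) = letterA (M+1) t * altA (M+1) (!t) M from rfl,
      ← mul_assoc, letter_sq, zero_mul]
  cases s
  · show letterA N false * altA N true N = 0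
    have h1 : letterA N false * (altA N false N + altA N true N) = 0 := by
      rw [hsum, mul_zero]
    rw [mul_add, hx false, zero_add] at h1
    exact h1
  · show letterA N true * altA N false N = 0
    have h1 : letterA N true * (altA N false N + altA N true N) = 0 := by
      rw [hsum, mul_zero]
    rw [mul_add, hx true, add_zero] at h1
    exact h1

lemma altA_zero_big (hN : 1 ≤ N) (s : Bool) (L : ℕ) (h : N < L) : altA N s L = 0 := by
  obtain ⟨M, hM⟩ : ∃ M, L = N + 1 + M := ⟨L - N - 1, by omega⟩
  subst hM
  clear h
  induction M generalizing s with
  | zero => exact altA_zero_succN N hN s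
  | succ M ih =>
    have : N + 1 + (M + 1) = (N + 1 + M) + 1 := by omega
    rw [this]
    show letterA N s * altA N (!s) (N + 1 + M) = 0
    rw [ih (!s), mul_zero]

lemma xyk_zero (hN : 1 ≤ N) (k : ℕ) (h : N < 2*k) :
    (xD 2 2 N * yD 2 2 N) ^ k = 0 := by
  rw [← altA_false_even, altA_zero_big N hN false _ h]

end ADside

section Hom

open CC

variable (N : ℕ)

/-- images of the generators -/
def genMap (N : ℕ) : Fin 3 → CC N := ![Xc N, Yc N, Xc N + Yc N]

def fCC (N : ℕ) : F3 →ₐ[ℤ] CC N := FreeAlgebra.lift ℤ (genMap N)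

lemma fCC_x : fCC N xF = Xc N := by
  rw [xF, fCC, FreeAlgebra.lift_ι_apply]; rfl

lemma fCC_y : fCC N yF = Yc N := by
  rw [yF, fCC, FreeAlgebra.lift_ι_apply]; rfl

lemma fCC_z : fCC N zF = Xc N + Yc N := by
  rw [zF, fCC, FreeAlgebra.lift_ι_apply]; rfl

lemma fCC_rel (hN : 2 ≤ N) : ∀ ⦃a b : F3⦄, relD 2 2 N a b → fCC N a = fCC N b := by
  rintro a b ⟨ha, rfl⟩
  rw [map_zero]
  simp only [Set.mem_insert_iff, Set.mem_singleton_iff] at ha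
  rcases ha with rfl | rfl | rfl | rfl
  · rw [map_add, map_add, fCC_x, fCC_y, fCC_z]
    exact two_smul_zero _
  · rw [map_pow, fCC_x, sq, Xc_sq]
  · rw [map_pow, fCC_y, sq, Yc_sq]
  · rw [map_pow, fCC_z, Xc_add_Yc, altsum_pow_N hN]

def rhoCC (N : ℕ) (hN : 2 ≤ N) : AD 2 2 N →+* CC N :=
  RingQuot.lift ⟨(fCC N).toRingHom, fCC_rel N hN⟩

variable (hN : 2 ≤ N)

lemma rho_x : rhoCC N hN (xD 2 2 N) = Xc N := by
  rw [xD, πD, rhoCC, RingQuot.lift_mkRingHom_apply]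
  exact fCC_x N

lemma rho_y : rhoCC N hN (yD 2 2 N) = Yc N := by
  rw [yD, πD, rhoCC, RingQuot.lift_mkRingHom_apply]
  exact fCC_y N

lemma rho_z : rhoCC N hN (zD 2 2 N) = Xc N + Yc N := by
  rw [zD, πD, rhoCC, RingQuot.lift_mkRingHom_apply]
  exact fCC_z N

/-- the detecting functional -/
def phiF (N : ℕ) (hN : 2 ≤ N) (k : ℕ) : AD 2 2 N →+ ZMod 2 :=
  (tauk N k).comp (rhoCC N hN).toAddMonoidHom

lemma tauk_ws' (k : ℕ) (s : Bool) (L : ℕ) :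
    tauk N k (ws N s L) = if L = 2*k then 1 else 0 := by
  rw [ws]; erw [tauk_single]; rw [tcount_wd, one_mul]

lemma tauk_Ee (k : ℕ) : tauk N k (Ee N) = 0 := by
  rw [Ee]; erw [tauk_single]; rw [tcount_mz, mul_zero]

lemma zmod2_add_self (c : ZMod 2) : c + c = 0 := by revert c; decide

lemma tauk_Xc_pow (k q : ℕ) (hk : 1 ≤ k) (hq : 1 ≤ q) :
    tauk N k (Xc N ^ q) = 0 := by
  rcases eq_or_ne q 1 with rfl | hq1
  · rw [pow_one, Xc, map_add, tauk_ws', tauk_Ee, if_neg (by omega), add_zero]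
  · have : q = 2 + (q - 2) := by omega
    rw [this, pow_add, sq, Xc_sq, zero_mul, map_zero]

lemma tauk_Yc_pow (k q : ℕ) (hk : 1 ≤ k) (hq : 1 ≤ q) :
    tauk N k (Yc N ^ q) = 0 := by
  rcases eq_or_ne q 1 with rfl | hq1
  · rw [pow_one, Yc, map_add, tauk_ws', tauk_Ee, if_neg (by omega), add_zero]
  · have : q = 2 + (q - 2) := by omega
    rw [this, pow_add, sq, Yc_sq, zero_mul, map_zero]

lemma tauk_Zc_pow (hN : 2 ≤ N) (k q : ℕ) (hq : 1 ≤ q) :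
    tauk N k ((Xc N + Yc N) ^ q) = 0 := by
  rw [Xc_add_Yc]
  rcases lt_or_ge q N with hlt | hge
  · rw [altsum_pow q hq hlt, map_add, tauk_ws', tauk_ws']
    split <;> decide
  · rw [altsum_pow_ge hN q hge, map_zero]

lemma NSub_le_ker (k : ℕ) (hk : 1 ≤ k) :
    NSub 2 2 N ≤ (phiF N hN k).ker := by
  rw [NSub]
  rw [AddSubgroup.closure_le]
  rintro u (⟨a, b, rfl⟩ | ⟨q, hq, hu⟩)
  · -- commutator
    simp only [SetLike.mem_coe, AddMonoidHom.mem_ker]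
    rw [map_sub]
    show tauk N k (rhoCC N hN (a*b)) - tauk N k (rhoCC N hN (b*a)) = 0
    have h1 : rhoCC N hN (a*b) = rhoCC N hN a * rhoCC N hN b := map_mul _ _ _
    have h2 : rhoCC N hN (b*a) = rhoCC N hN b * rhoCC N hN a := map_mul _ _ _
    rw [h1, h2, tauk_trace k hk (rhoCC N hN a) (rhoCC N hN b), sub_self]
  · simp only [SetLike.mem_coe, AddMonoidHom.mem_ker]
    rcases hu with rfl | rfl | rfl
    · show tauk N k (rhoCC N hN (xD 2 2 N ^ q)) = 0
      have h1 : rhoCC N hN (xD 2 2 N ^ q) = Xc N ^ q := by rw [map_pow, rho_x]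
      rw [h1, tauk_Xc_pow N k q hk hq]
    · show tauk N k (rhoCC N hN (yD 2 2 N ^ q)) = 0
      have h1 : rhoCC N hN (yD 2 2 N ^ q) = Yc N ^ q := by rw [map_pow, rho_y]
      rw [h1, tauk_Yc_pow N k q hk hq]
    · show tauk N k (rhoCC N hN (zD 2 2 N ^ q)) = 0
      have h1 : rhoCC N hN (zD 2 2 N ^ q) = (Xc N + Yc N) ^ q := by rw [map_pow, rho_z]
      rw [h1, tauk_Zc_pow N hN k q hq]

lemma phi_g (k : ℕ) (hk : 1 ≤ k) (h2k : 2*k ≤ N) :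
    phiF N hN k ((xD 2 2 N * yD 2 2 N) ^ k) = 1 := by
  show tauk N k (rhoCC N hN ((xD 2 2 N * yD 2 2 N) ^ k)) = 1
  have h1 : rhoCC N hN ((xD 2 2 N * yD 2 2 N) ^ k) = (Xc N * Yc N) ^ k := by
    rw [map_pow, map_mul, rho_x, rho_y]
  rw [h1, XY_pow hN k hk h2k, map_add, tauk_ws', tauk_Ee, if_pos rfl, add_zero]

end Hom

section Main

open CC AddSubgroup

variable (N : ℕ)

lemma mkL_eq_zero_iff (u : AD 2 2 N) : mkL 2 2 N u = 0 ↔ u ∈ NSub 2 2 N := by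
  rw [mkL, ← AddMonoidHom.mem_ker, QuotientAddGroup.ker_mk']

lemma mkL_mul_comm (a b : AD 2 2 N) : mkL 2 2 N (a * b) = mkL 2 2 N (b * a) := by
  have h : mkL 2 2 N (a * b - b * a) = 0 :=
    (mkL_eq_zero_iff N _).mpr (subset_closure (Or.inl ⟨a, b, rfl⟩))
  rw [map_sub, sub_eq_zero] at h
  exact h

def PB (v : List Bool) : AD 2 2 N := (v.map (letterA N)).prod

lemma PB_nil : PB N ([] : List Bool) = 1 := rfl

lemma PB_cons (s : Bool) (v : List Bool) : PB N (s :: v) = letterA N s * PB N v := by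
  rw [PB, List.map_cons, List.prod_cons]
  rfl

def altList : Bool → ℕ → List Bool
  | _, 0 => []
  | s, (L+1) => s :: altList (!s) L

lemma altList_length (s : Bool) (L : ℕ) : (altList s L).length = L := by
  induction L generalizing s with
  | zero => rfl
  | succ L ih => show (altList s (L+1)).length = L + 1
                 rw [altList, List.length_cons, ih]

lemma PB_altList (s : Bool) (L : ℕ) : PB N (altList s L) = altA N s L := by
  induction L generalizing s with
  | zero => rfl
  | succ L ih =>
    show PB N (s :: altList (!s) L) = altA N s (L+1)
    rw [PB_cons, ih]
    rfl

lemma list_struct : ∀ v : List Bool,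
    (∃ v₁ s v₂, v = v₁ ++ s :: s :: v₂) ∨ (∃ s, v = altList s v.length) := by
  intro v
  induction v with
  | nil => exact Or.inr ⟨false, rfl⟩
  | cons a tail ih =>
    rcases ih with ⟨v₁, s, v₂, h⟩ | ⟨s, h⟩
    · exact Or.inl ⟨a :: v₁, s, v₂, by rw [h]; rfl⟩
    · cases tail with
      | nil => exact Or.inr ⟨a, rfl⟩
      | cons b t =>
        have hb : b = s := by
          have := h
          rw [List.length_cons] at this
          rw [altList] at this
          exact (List.cons.injEq _ _ _ _).mp this |>.1
        rcases eq_or_ne a s with rfl | hne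
        · refine Or.inl ⟨[], a, altList (!a) t.length, ?_⟩
          rw [List.nil_append]
          subst hb
          rw [h, List.length_cons, altList]
        · refine Or.inr ⟨a, ?_⟩
          have hsa : s = !a := by cases a <;> cases s <;> simp_all
          rw [List.length_cons, altList, ← hsa, ← h]

lemma PB_dup (v₁ v₂ : List Bool) (s : Bool) : PB N (v₁ ++ s :: s :: v₂) = 0 := by
  rw [PB, List.map_append, List.prod_append, List.map_cons, List.map_cons,
    List.prod_cons, List.prod_cons, ← mul_assoc (letterA N s), letter_sq, zero_mul,
    mul_zero]

lemma PB_class (hN : 1 ≤ N) (v : List Bool) :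
    (v.length % 2 = 1 → mkL 2 2 N (PB N v) = 0) ∧
    mkL 2 2 N (PB N v) ∈
      AddSubgroup.closure {mkL 2 2 N ((xD 2 2 N * yD 2 2 N) ^ (v.length / 2))} := by
  rcases list_struct v with ⟨v₁, s, v₂, rfl⟩ | ⟨s, hv⟩
  · rw [PB_dup, map_zero]
    exact ⟨fun _ => rfl, zero_mem _⟩
  · obtain ⟨ℓ, hℓ⟩ : ∃ ℓ, v.length = ℓ := ⟨_, rfl⟩
    rw [hℓ] at hv
    rw [hℓ, hv, PB_altList]
    rcases Nat.eq_zero_or_pos ℓ with h0 | h1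
    · rw [h0]
      refine ⟨fun h => by omega, ?_⟩
      have : altA N s 0 = (xD 2 2 N * yD 2 2 N) ^ (0 / 2) := by
        rw [Nat.zero_div, pow_zero]; rfl
      rw [this]
      exact subset_closure rfl
    rcases eq_or_ne ℓ 1 with h1' | h2
    · -- single letter: in powSet
      have h0 : mkL 2 2 N (altA N s ℓ) = 0 := by
        rw [h1']
        have : altA N s 1 = letterA N s := by
          show letterA N s * altA N (!s) 0 = letterA N s
          rw [show altA N (!s) 0 = 1 from rfl, mul_one]
        rw [this]
        refine (mkL_eq_zero_iff N _).mpr (subset_closure (Or.inr ⟨1, le_refl 1, ?_⟩))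
        cases s
        · exact Or.inl (pow_one _).symm
        · exact Or.inr (Or.inl (pow_one _).symm)
      exact ⟨fun _ => h0, by rw [h0]; exact zero_mem _⟩
    · -- length at least 2
      have hℓ2 : 2 ≤ ℓ := by omega
      obtain ⟨M, rfl⟩ : ∃ M, ℓ = M + 2 := ⟨ℓ - 2, by omega⟩
      have hrot : ∀ t : Bool, mkL 2 2 N (altA N t (M+2))
          = mkL 2 2 N (altA N (!t) (M+1) * letterA N t) := by
        intro t
        have : altA N t (M+2) = letterA N t * altA N (!t) (M+1) := rfl
        rw [this, mkL_mul_comm]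
      rcases Nat.mod_two_eq_zero_or_one (M+2) with hpar | hpar
      · -- even length
        refine ⟨fun h => by omega, ?_⟩
        have key : mkL 2 2 N (altA N false (M+2)) ∈
            AddSubgroup.closure {mkL 2 2 N ((xD 2 2 N * yD 2 2 N) ^ ((M+2) / 2))} := by
          have : altA N false (M+2) = (xD 2 2 N * yD 2 2 N) ^ ((M+2)/2) := by
            rw [← altA_false_even]
            congr 1
            omega
          rw [this]
          exact subset_closure rfl
        cases s
        · exact key
        · -- rotate
          rw [hrot true, altA_mul_letter N (M+1) (by omega) (!true) true,
            if_neg (by simp [MD.lastL]; omega)]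
          exact key
      · -- odd length: rotation creates a clash
        have h0 : mkL 2 2 N (altA N s (M+2)) = 0 := by
          rw [hrot s, altA_mul_letter N (M+1) (by omega) (!s) s,
            if_pos (by rw [MD.lastL, if_neg (by omega), Bool.not_not]), map_zero]
        exact ⟨fun _ => h0, by rw [h0]; exact zero_mem _⟩

def PBset (ℓ : ℕ) : Set (AD 2 2 N) := {u | ∃ v : List Bool, v.length = ℓ ∧ u = PB N v}

lemma mul_letter_closure (i : Fin 3) (ℓ : ℕ) (u : AD 2 2 N)
    (hu : u ∈ AddSubgroup.closure (PBset N ℓ)) :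
    πD 2 2 N (FreeAlgebra.ι ℤ i) * u ∈ AddSubgroup.closure (PBset N (ℓ+1)) := by
  induction hu using AddSubgroup.closure_induction with
  | mem u hu =>
      obtain ⟨v0, hlen, rfl⟩ := hu
      subst hlen
      fin_cases i
      · refine subset_closure ⟨false :: v0, by rw [List.length_cons], ?_⟩
        rw [PB_cons]
        rfl
      · refine subset_closure ⟨true :: v0, by rw [List.length_cons], ?_⟩
        rw [PB_cons]
        rfl
      · show πD 2 2 N (FreeAlgebra.ι ℤ 2) * PB N v0 ∈ AddSubgroup.closure (PBset N (v0.length + 1))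
        have hz : πD 2 2 N (FreeAlgebra.ι ℤ 2) * PB N v0
            = -(letterA N false * PB N v0 + letterA N true * PB N v0) := by
          calc πD 2 2 N (FreeAlgebra.ι ℤ 2) * PB N v0
              = -(xD 2 2 N + yD 2 2 N) * PB N v0 := by
                rw [show πD 2 2 N (FreeAlgebra.ι ℤ 2) = zD 2 2 N from rfl, z_eq]
            _ = -((xD 2 2 N + yD 2 2 N) * PB N v0) := neg_mul (xD 2 2 N + yD 2 2 N) (PB N v0)
            _ = -(letterA N false * PB N v0 + letterA N true * PB N v0) := by
                rw [add_mul]; rfl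
        rw [hz]
        refine neg_mem (add_mem ?_ ?_)
        · exact subset_closure ⟨false :: v0, by rw [List.length_cons], (PB_cons N _ _)⟩
        · exact subset_closure ⟨true :: v0, by rw [List.length_cons], (PB_cons N _ _)⟩
    | zero => rw [mul_zero]; exact zero_mem _
    | add a b ha hb hA hB => rw [mul_add]; exact add_mem hA hB
    | neg a ha hA =>
      have : πD 2 2 N (FreeAlgebra.ι ℤ i) * (-a)
          = -(πD 2 2 N (FreeAlgebra.ι ℤ i) * a) := mul_neg (πD 2 2 N (FreeAlgebra.ι ℤ i)) a
      rw [this]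
      exact neg_mem hA

lemma monword_mem (w : List (Fin 3)) :
    (w.map fun i => πD 2 2 N (FreeAlgebra.ι ℤ i)).prod
      ∈ AddSubgroup.closure (PBset N w.length) := by
  induction w with
  | nil => exact subset_closure ⟨[], rfl, rfl⟩
  | cons i w ih =>
    rw [List.map_cons, List.prod_cons, List.length_cons]
    exact mul_letter_closure N i w.length _ ih

end Main

section Final

open CC AddSubgroup

variable (N : ℕ)

lemma yxy_aux (j : ℕ) :
    yD 2 2 N * (xD 2 2 N * yD 2 2 N) ^ j * xD 2 2 N = (yD 2 2 N * xD 2 2 N) ^ (j+1) := by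
  induction j with
  | zero => rw [pow_zero, mul_one, pow_one]
  | succ j ih =>
    rw [pow_succ' (xD 2 2 N * yD 2 2 N) j, ← mul_assoc (yD 2 2 N) (xD 2 2 N * yD 2 2 N) _,
      ← mul_assoc (yD 2 2 N) (xD 2 2 N) (yD 2 2 N),
      mul_assoc (yD 2 2 N * xD 2 2 N) (yD 2 2 N) ((xD 2 2 N * yD 2 2 N) ^ j),
      mul_assoc (yD 2 2 N * xD 2 2 N) _ (xD 2 2 N), ih, ← pow_succ']

lemma z_pow_even (k : ℕ) (hk : 1 ≤ k) :
    zD 2 2 N ^ (2*k) = (xD 2 2 N * yD 2 2 N) ^ k + (yD 2 2 N * xD 2 2 N) ^ k := by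
  have h1 : zD 2 2 N ^ (2*k) = (-(xD 2 2 N + yD 2 2 N)) ^ (2*k) := by rw [z_eq]
  have h2 : (-(xD 2 2 N + yD 2 2 N)) ^ (2*k) = (xD 2 2 N + yD 2 2 N) ^ (2*k) :=
    Even.neg_pow (even_two_mul k) (xD 2 2 N + yD 2 2 N)
  rw [h1, h2, sum_pow_alt N (2*k) (by omega), altA_false_even, altA_true_even]

lemma two_g_mem (k : ℕ) (hk : 1 ≤ k) :
    (xD 2 2 N * yD 2 2 N) ^ k + (xD 2 2 N * yD 2 2 N) ^ k ∈ NSub 2 2 N := by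
  obtain ⟨j, rfl⟩ : ∃ j, k = j + 1 := ⟨k - 1, by omega⟩
  have hA : xD 2 2 N * (yD 2 2 N * (xD 2 2 N * yD 2 2 N) ^ j)
      = (xD 2 2 N * yD 2 2 N) ^ (j+1) := by
    rw [← mul_assoc, ← pow_succ']
  have hB := yxy_aux N j
  have key : (xD 2 2 N * yD 2 2 N) ^ (j+1) + (xD 2 2 N * yD 2 2 N) ^ (j+1)
      = zD 2 2 N ^ (2*(j+1)) +
        (xD 2 2 N * (yD 2 2 N * (xD 2 2 N * yD 2 2 N) ^ j)
          - (yD 2 2 N * (xD 2 2 N * yD 2 2 N) ^ j) * xD 2 2 N) := by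
    rw [z_pow_even N (j+1) (by omega), hA]
    rw [show yD 2 2 N * (xD 2 2 N * yD 2 2 N) ^ j * xD 2 2 N
        = (yD 2 2 N * (xD 2 2 N * yD 2 2 N) ^ j) * xD 2 2 N from rfl] at hB
    rw [hB]
    abel
  rw [key]
  refine add_mem (subset_closure (Or.inr ⟨2*(j+1), by omega, Or.inr (Or.inr rfl)⟩))
    (subset_closure (Or.inl ⟨_, _, rfl⟩))

lemma grade_le (hN : 1 ≤ N) (m : ℕ) :
    LamGrade 2 2 N m ≤
      AddSubgroup.closure {mkL 2 2 N ((xD 2 2 N * yD 2 2 N) ^ (m / 4))} := by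
  rw [LamGrade, AddSubgroup.map_le_iff_le_comap, AddSubgroup.closure_le]
  rintro u ⟨w, hw, rfl⟩
  simp only [SetLike.mem_coe, AddSubgroup.mem_comap]
  have h2 : AddSubgroup.closure (PBset N w.length) ≤
      AddSubgroup.comap (mkL 2 2 N)
        (AddSubgroup.closure {mkL 2 2 N ((xD 2 2 N * yD 2 2 N) ^ (m/4))}) := by
    rw [AddSubgroup.closure_le]
    rintro u' ⟨v, hlen, rfl⟩
    simp only [SetLike.mem_coe, AddSubgroup.mem_comap]
    have hcl := (PB_class N hN v).2
    have he : v.length / 2 = m / 4 := by omega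
    rw [he] at hcl
    exact hcl
  exact h2 (monword_mem N w)

lemma grade_bot_odd (m : ℕ) (hm : m % 2 = 1) : LamGrade 2 2 N m = ⊥ := by
  rw [LamGrade]
  have h : monD 2 2 N m = ∅ := by
    ext u
    simp only [monD, Set.mem_setOf_eq, Set.mem_empty_iff_false, iff_false, not_exists]
    intro w hw
    omega
  rw [h, AddSubgroup.closure_empty, AddSubgroup.map_bot]

lemma grade_bot_two (hN : 1 ≤ N) (m : ℕ) (hm : m % 4 = 2) : LamGrade 2 2 N m = ⊥ := by
  rw [← le_bot_iff, LamGrade, AddSubgroup.map_le_iff_le_comap, AddSubgroup.closure_le]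
  rintro u ⟨w, hw, rfl⟩
  simp only [SetLike.mem_coe, AddSubgroup.mem_comap]
  have h2 : AddSubgroup.closure (PBset N w.length) ≤
      AddSubgroup.comap (mkL 2 2 N) ⊥ := by
    rw [AddSubgroup.closure_le]
    rintro u' ⟨v, hlen, rfl⟩
    simp only [SetLike.mem_coe, AddSubgroup.mem_comap, AddSubgroup.mem_bot]
    exact (PB_class N hN v).1 (by omega)
  exact h2 (monword_mem N w)

/-- the standard word of `(xy)^k` -/
def wrep : ℕ → List (Fin 3)
  | 0 => []
  | (k+1) => 0 :: 1 :: wrep k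

lemma wrep_length (k : ℕ) : (wrep k).length = 2*k := by
  induction k with
  | zero => rfl
  | succ k ih => show (0 :: 1 :: wrep k).length = 2*(k+1)
                 rw [List.length_cons, List.length_cons, ih]; omega

lemma wrep_prod (k : ℕ) :
    ((wrep k).map fun i => πD 2 2 N (FreeAlgebra.ι ℤ i)).prod
      = (xD 2 2 N * yD 2 2 N) ^ k := by
  induction k with
  | zero => rw [pow_zero]; rfl
  | succ k ih =>
    show ((0 :: 1 :: wrep k).map fun i => πD 2 2 N (FreeAlgebra.ι ℤ i)).prod = _
    rw [List.map_cons, List.map_cons, List.prod_cons, List.prod_cons, ih]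
    show xD 2 2 N * (yD 2 2 N * (xD 2 2 N * yD 2 2 N) ^ k) = _
    rw [← mul_assoc, ← pow_succ']

lemma g_mem_monD (k : ℕ) : (xD 2 2 N * yD 2 2 N) ^ k ∈ monD 2 2 N (4*k) :=
  ⟨wrep k, by rw [wrep_length]; omega, (wrep_prod N k).symm⟩

lemma main_thm (hN : 2 ≤ N) (m : ℕ) (hm : 1 ≤ m) :
    (¬ (4 ∣ m ∧ m ≤ 2 * N) → LamGrade 2 2 N m = ⊥) ∧
    (4 ∣ m → m ≤ 2 * N →
      LamGrade 2 2 N m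
        = AddSubgroup.closure
            {mkL 2 2 N ((xD 2 2 N * yD 2 2 N) ^ (m / 4))} ∧
      Nat.card ↥(LamGrade 2 2 N m) = 2) := by
  constructor
  · intro hbad
    rcases (show m % 4 = 0 ∨ m % 2 = 1 ∨ m % 4 = 2 by omega) with h0 | h1 | h2
    · -- 4 ∣ m but m > 2N
      have h4 : 4 ∣ m := Nat.dvd_of_mod_eq_zero h0
      have hgt : ¬ m ≤ 2 * N := fun hle => hbad ⟨h4, hle⟩
      obtain ⟨k, rfl⟩ := h4
      have hk4 : 4 * k / 4 = k := by omega
      have hz : (xD 2 2 N * yD 2 2 N) ^ (4 * k / 4) = 0 := by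
        rw [hk4]
        exact xyk_zero N (by omega) k (by omega)
      have := grade_le N (by omega) (4*k)
      rw [hz, map_zero, AddSubgroup.closure_singleton_zero] at this
      exact le_bot_iff.mp this
    · exact grade_bot_odd N m h1
    · exact grade_bot_two N (by omega) m h2
  · intro h4 hle
    obtain ⟨k, rfl⟩ := h4
    have hk4 : 4 * k / 4 = k := by omega
    have hk : 1 ≤ k := by omega
    have h2k : 2 * k ≤ N := by omega
    set g := (xD 2 2 N * yD 2 2 N) ^ k with hg
    have hgmem : mkL 2 2 N g ∈ LamGrade 2 2 N (4*k) := by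
      rw [LamGrade]
      exact AddSubgroup.mem_map.mpr ⟨g, subset_closure (g_mem_monD N k), rfl⟩
    have hEq : LamGrade 2 2 N (4*k)
        = AddSubgroup.closure {mkL 2 2 N ((xD 2 2 N * yD 2 2 N) ^ (4 * k / 4))} := by
      refine le_antisymm (grade_le N (by omega) (4*k)) ?_
      rw [AddSubgroup.closure_le, hk4]
      intro u hu
      rw [Set.mem_singleton_iff] at hu
      rw [hu]
      exact hgmem
    refine ⟨hEq, ?_⟩
    -- order 2
    have hg2 : (2 : ℕ) • mkL 2 2 N g = 0 := by
      rw [two_nsmul, ← map_add, (mkL_eq_zero_iff N _).2 (two_g_mem N k hk)]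
    have hgne : mkL 2 2 N g ≠ 0 := by
      intro h
      have hmem := (mkL_eq_zero_iff N _).mp h
      have h0 : phiF N hN k g = 0 := NSub_le_ker N hN k hk hmem
      have h1 : phiF N hN k g = 1 := phi_g N hN k hk h2k
      rw [h0] at h1
      exact absurd h1 (by decide)
    have hord : addOrderOf (mkL 2 2 N g) = 2 := addOrderOf_eq_prime hg2 hgne
    rw [hEq, hk4, ← hg, ← AddSubgroup.zmultiples_eq_closure, Nat.card_zmultiples, hord]

end Final

/-- For `A = ℤ⟨x,y,z⟩/((x+y+z, x², y², z^{n−2}))` with `n ≥ 4` (type `D_n`): for every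
`m ≥ 1`, `Λ_m = 0` unless `4 ∣ m` and `m ≤ 2(n−2)`; and for each such `m`, `Λ_m` is a
cyclic group of order 2 generated by the class of `(xy)^{m/4}`. -/
theorem stmt_17 (n : ℕ) (hn : 4 ≤ n) (m : ℕ) (hm : 1 ≤ m) :
    (¬ (4 ∣ m ∧ m ≤ 2 * (n - 2)) → LamGrade 2 2 (n - 2) m = ⊥) ∧
    (4 ∣ m → m ≤ 2 * (n - 2) →
      LamGrade 2 2 (n - 2) m
        = AddSubgroup.closure
            {mkL 2 2 (n - 2) ((xD 2 2 (n - 2) * yD 2 2 (n - 2)) ^ (m / 4))} ∧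
      Nat.card ↥(LamGrade 2 2 (n - 2) m) = 2) :=
  main_thm (n - 2) (by omega) m hm
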